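/- Let A ⊂ ℕⁿ be a finite nonempty set all of whose elements have the same coordinate sum, and let c ∈ C_A be a point of the copositive cone. Then c lies on the topological boundary of C_A in ℝ^A if and only if there exist w ∈ ℝⁿ and u ∈ ℝⁿ_{>0} such that Σ_{a∈A_w} c_a u^a = 0, where A_w = { a ∈ A : ⟨w,a⟩ = min_{b∈A} ⟨w,b⟩ }. (Equivalently: a copositive f_c lies on the boundary of C_A exactly when it has a zero on the nonnegative part of the toric variety X_A.) -/

import Mathlib

open Filter Topology Real

namespace CoposAux

variable {n : ℕ}

noncomputable def dt (x y : Fin n → ℝ) : ℝ := ∑ i, x i * y i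

lemma dt_comm (x y : Fin n → ℝ) : dt x y = dt y x :=
  Finset.sum_congr rfl fun i _ => mul_comm _ _

lemma dt_add_left (x y z : Fin n → ℝ) : dt (x + y) z = dt x z + dt y z := by
  unfold dt; rw [← Finset.sum_add_distrib]; exact Finset.sum_congr rfl fun i _ => by
    simp [add_mul]

lemma dt_smul_left (r : ℝ) (x z : Fin n → ℝ) : dt (r • x) z = r * dt x z := by
  unfold dt; rw [Finset.mul_sum]; exact Finset.sum_congr rfl fun i _ => by
    simp [mul_assoc]

lemma dt_zero_left (z : Fin n → ℝ) : dt 0 z = 0 := by simp [dt]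

lemma dt_sub_left (x y z : Fin n → ℝ) : dt (x - y) z = dt x z - dt y z := by
  unfold dt; rw [← Finset.sum_sub_distrib]; exact Finset.sum_congr rfl fun i _ => by
    simp [sub_mul]

lemma dt_add_right (x y z : Fin n → ℝ) : dt x (y + z) = dt x y + dt x z := by
  rw [dt_comm, dt_add_left, dt_comm y x, dt_comm z x]

lemma dt_sub_right (x y z : Fin n → ℝ) : dt x (y - z) = dt x y - dt x z := by
  rw [dt_comm, dt_sub_left, dt_comm y x, dt_comm z x]

lemma dt_self_eq_zero {x : Fin n → ℝ} (h : dt x x = 0) : x = 0 := by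
  funext i
  have h2 := (Finset.sum_eq_zero_iff_of_nonneg (fun j _ => mul_self_nonneg (x j))).mp h i
    (Finset.mem_univ i)
  simpa [mul_self_eq_zero] using h2

noncomputable def lincomb (b : Set (Fin n → ℝ)) [Fintype ↥b] (l : ↥b → ℝ) : Fin n → ℝ :=
  ∑ j : ↥b, l j • (j : Fin n → ℝ)

lemma lincomb_add (b : Set (Fin n → ℝ)) [Fintype ↥b] (l m : ↥b → ℝ) :
    lincomb b (l + m) = lincomb b l + lincomb b m := by
  unfold lincomb; rw [← Finset.sum_add_distrib]
  exact Finset.sum_congr rfl fun j _ => by simp [add_smul]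

lemma lincomb_smul (b : Set (Fin n → ℝ)) [Fintype ↥b] (r : ℝ) (l : ↥b → ℝ) :
    lincomb b (r • l) = r • lincomb b l := by
  unfold lincomb; rw [Finset.smul_sum]
  exact Finset.sum_congr rfl fun j _ => by simp [smul_smul]

lemma dt_lincomb (b : Set (Fin n → ℝ)) [Fintype ↥b] (x : Fin n → ℝ) (l : ↥b → ℝ) :
    dt x (lincomb b l) = ∑ j : ↥b, l j * dt x (j : Fin n → ℝ) := by
  unfold dt lincomb
  simp only [Finset.sum_apply, Pi.smul_apply, smul_eq_mul, Finset.mul_sum]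
  rw [Finset.sum_comm]
  refine Finset.sum_congr rfl fun j _ => ?_
  exact Finset.sum_congr rfl fun i _ => by ring

noncomputable def gram (b : Set (Fin n → ℝ)) [Fintype ↥b] : (↥b → ℝ) →ₗ[ℝ] (↥b → ℝ) where
  toFun l := fun j => dt (j : Fin n → ℝ) (lincomb b l)
  map_add' l m := by funext j; simp [lincomb_add, dt_add_right]
  map_smul' r l := by
    funext j
    simp only [lincomb_smul, RingHom.id_apply, Pi.smul_apply, smul_eq_mul]
    rw [dt_comm, dt_smul_left, dt_comm]

lemma gram_injective (b : Set (Fin n → ℝ)) [Fintype ↥b]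
    (hli : LinearIndependent ℝ (Subtype.val : b → (Fin n → ℝ))) :
    Function.Injective (gram b) := by
  have key : ∀ l : ↥b → ℝ, gram b l = 0 → l = 0 := by
    intro l hl
    have hx : dt (lincomb b l) (lincomb b l) = 0 := by
      rw [dt_lincomb]
      refine Finset.sum_eq_zero fun j _ => ?_
      rw [dt_comm]
      have hj : dt (j : Fin n → ℝ) (lincomb b l) = 0 := congrFun hl j
      rw [hj, mul_zero]
    have hz : lincomb b l = 0 := dt_self_eq_zero hx
    have h2 := Fintype.linearIndependent_iff.mp hli l (by simpa [lincomb] using hz)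
    funext j; exact h2 j
  intro l m hlm
  have h3 : l - m = 0 := key (l - m) (by rw [map_sub, hlm, sub_self])
  have := sub_eq_zero.mp h3
  exact this


noncomputable def mon (u : Fin n → ℝ) (a : Fin n → ℕ) : ℝ := ∏ i, u i ^ a i

lemma mon_pos {u : Fin n → ℝ} (hu : ∀ i, 0 < u i) (a : Fin n → ℕ) : 0 < mon u a :=
  Finset.prod_pos fun i _ => pow_pos (hu i) _

lemma tendsto_dt_span (vk : ℕ → (Fin n → ℝ)) (v : Fin n → ℝ) (s : Set (Fin n → ℝ))
    (hs : ∀ x ∈ s, Tendsto (fun k => dt x (vk k)) atTop (𝓝 (dt x v)))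
    {x : Fin n → ℝ} (hx : x ∈ Submodule.span ℝ s) :
    Tendsto (fun k => dt x (vk k)) atTop (𝓝 (dt x v)) := by
  induction hx using Submodule.span_induction with
  | mem x h => exact hs x h
  | zero => simpa [dt_zero_left] using (tendsto_const_nhds : Tendsto (fun _ : ℕ => (0:ℝ)) _ _)
  | add x y hx hy hx' hy' => simpa [dt_add_left] using hx'.add hy'
  | smul r x hx hx' => simpa [dt_smul_left] using hx'.const_mul r

lemma dt_eq_span (r p : Fin n → ℝ) (s : Set (Fin n → ℝ))
    (hs : ∀ x ∈ s, dt x r = dt x p)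
    {x : Fin n → ℝ} (hx : x ∈ Submodule.span ℝ s) : dt x r = dt x p := by
  induction hx using Submodule.span_induction with
  | mem x h => exact hs x h
  | zero => simp [dt_zero_left]
  | add x y hx hy hx' hy' => simp [dt_add_left, hx', hy']
  | smul r' x hx hx' => simp [dt_smul_left, hx']


/-- weight -/
noncomputable def dw (w : Fin n → ℝ) (a : Fin n → ℕ) : ℝ := ∑ i, w i * (a i : ℝ)

lemma tendsto_rpow_zero {e : ℝ} (he : 0 < e) :
    Tendsto (fun t : ℝ => t ^ e) (𝓝[>] (0:ℝ)) (𝓝 0) := by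
  have h1 : Tendsto (fun t : ℝ => rexp (log t * e)) (𝓝[>] (0:ℝ)) (𝓝 0) := by
    apply Real.tendsto_exp_atBot.comp
    have := Real.tendsto_log_nhdsGT_zero
    exact (Filter.Tendsto.atBot_mul_const he this : _)
  apply h1.congr'
  filter_upwards [self_mem_nhdsWithin] with t ht
  exact (Real.rpow_def_of_pos ht e).symm

lemma mon_rpow {t : ℝ} (ht : 0 < t) (w u : Fin n → ℝ) (a : Fin n → ℕ) :
    mon (fun i => t ^ (w i) * u i) a = t ^ (dw w a) * mon u a := by
  unfold mon dw
  rw [Real.rpow_sum_of_pos ht, ← Finset.prod_mul_distrib]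
  refine Finset.prod_congr rfl fun i _ => ?_
  rw [mul_pow, ← Real.rpow_natCast (t ^ w i) (a i), ← Real.rpow_mul ht.le]

open scoped Classical in
theorem backward (n : ℕ) (A : Finset (Fin n → ℕ)) (hA : A.Nonempty) (C : Set (↥A → ℝ))
    (hC : C = {c : ↥A → ℝ | ∀ u : Fin n → ℝ, (∀ i, 0 ≤ u i) →
      0 ≤ ∑ a ∈ A.attach, c a * ∏ i, u i ^ a.1 i})
    (c : ↥A → ℝ) (hc : c ∈ C)
    (w : Fin n → ℝ) (u : Fin n → ℝ) (hu : ∀ i, 0 < u i)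
    (h0 : ∑ a ∈ A.attach.filter (fun a => ∀ b ∈ A,
            ∑ i, w i * (a.1 i : ℝ) ≤ ∑ i, w i * (b i : ℝ)),
          c a * ∏ i, u i ^ a.1 i = 0) :
    c ∈ frontier C := by
  rw [frontier_eq_closure_inter_closure]
  refine ⟨subset_closure hc, ?_⟩
  -- the minimizing exponent
  obtain ⟨b0, hb0A, hb0⟩ := Finset.exists_min_image A (fun b => dw w b) hA
  set a0 : ↥A := ⟨b0, hb0A⟩ with ha0def
  set P : ↥A → Prop := fun a => ∀ b ∈ A, ∑ i, w i * (a.1 i : ℝ) ≤ ∑ i, w i * (b i : ℝ) with hP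
  have hPdw : ∀ a : ↥A, P a ↔ ∀ b ∈ A, dw w a.1 ≤ dw w b := by intro a; rfl
  have ha0P : P a0 := by intro b hb; exact hb0 b hb
  have ha0mem : a0 ∈ A.attach.filter P := by
    simp only [Finset.mem_filter, Finset.mem_attach, true_and]; exact ha0P
  set m : ℝ := dw w b0 with hm
  have hdm : ∀ a : ↥A, a ∈ A.attach.filter P → dw w a.1 = m := by
    intro a ha
    rw [Finset.mem_filter] at ha
    exact le_antisymm (ha.2 b0 hb0A) (hb0 a.1 a.2)
  have hdm' : ∀ a : ↥A, m ≤ dw w a.1 := fun a => hb0 a.1 a.2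
  -- sequence of perturbed coefficients
  set cs : ℕ → ↥A → ℝ := fun k a => c a - (1/(k+1)) * (if a = a0 then 1 else 0) with hcs
  have hten : Tendsto cs atTop (𝓝 c) := by
    rw [tendsto_pi_nhds]
    intro a
    have : Tendsto (fun k : ℕ => (1/((k:ℝ)+1)) * (if a = a0 then (1:ℝ) else 0)) atTop (𝓝 0) := by
      simpa using tendsto_one_div_add_atTop_nhds_zero_nat.mul_const (if a = a0 then (1:ℝ) else 0)
    simpa [hcs, one_div] using (tendsto_const_nhds (x := c a)).sub this
  rw [mem_closure_iff_seq_limit]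
  refine ⟨cs, fun k => ?_, hten⟩
  -- show cs k ∉ C
  set ε : ℝ := 1/((k:ℝ)+1) with hε
  have hεpos : 0 < ε := by positivity
  simp only [hC, Set.mem_compl_iff, Set.mem_setOf_eq, not_forall]
  -- the tail function
  set g : ℝ → ℝ := fun t => ∑ a ∈ A.attach.filter (fun a => ¬ P a),
      c a * t ^ (dw w a.1 - m) * mon u a.1 with hg
  have hgten : Tendsto g (𝓝[>] (0:ℝ)) (𝓝 0) := by
    have : Tendsto g (𝓝[>] (0:ℝ))
        (𝓝 (∑ a ∈ A.attach.filter (fun a => ¬ P a), c a * 0 * mon u a.1)) := by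
      apply tendsto_finset_sum
      intro a ha
      have hpos : 0 < dw w a.1 - m := by
        rw [Finset.mem_filter] at ha
        have : ¬ ∀ b ∈ A, dw w a.1 ≤ dw w b := ha.2
        push_neg at this
        obtain ⟨b, hbA, hb⟩ := this
        have : m < dw w a.1 := lt_of_le_of_lt (hb0 b hbA) hb
        linarith
      exact (((tendsto_rpow_zero hpos).const_mul (c a)).mul_const (mon u a.1))
    simpa using this
  have hmonpos : 0 < mon u b0 := mon_pos hu b0
  have hev : ∀ᶠ t in 𝓝[>] (0:ℝ), g t < ε * mon u b0 ∧ 0 < t := by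
    have h1 : ∀ᶠ t in 𝓝[>] (0:ℝ), g t < ε * mon u b0 :=
      hgten.eventually (eventually_lt_nhds (by positivity) |>.mono (fun x h => h))
    exact h1.and (eventually_mem_nhdsWithin.mono (fun t ht => ht))
  obtain ⟨t, hgt, ht⟩ := hev.exists
  refine ⟨fun i => t ^ (w i) * u i, fun i => le_of_lt (mul_pos (Real.rpow_pos_of_pos ht _) (hu i)), ?_⟩
  rw [not_le]
  · 
    have hmon : ∀ a : ↥A, (∏ i, (t ^ (w i) * u i) ^ a.1 i) = t ^ (dw w a.1) * mon u a.1 :=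
      fun a => mon_rpow ht w u a.1
    have hsum : ∑ a ∈ A.attach, cs k a * ∏ i, (t ^ (w i) * u i) ^ a.1 i
        = t ^ m * ((0 - ε * mon u b0) + g t) := by
      have e1 : ∀ a : ↥A, cs k a * ∏ i, (t ^ (w i) * u i) ^ a.1 i
          = t ^ m * (cs k a * t ^ (dw w a.1 - m) * mon u a.1) := by
        intro a
        rw [hmon a]
        have : t ^ (dw w a.1) = t ^ m * t ^ (dw w a.1 - m) := by
          rw [← Real.rpow_add ht]; ring_nf
        rw [this]; ring
      rw [Finset.sum_congr rfl (fun a _ => e1 a), ← Finset.mul_sum]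
      congr 1
      rw [← Finset.sum_filter_add_sum_filter_not A.attach P]
      congr 1
      · -- face part
        have : ∀ a ∈ A.attach.filter P, cs k a * t ^ (dw w a.1 - m) * mon u a.1
            = c a * mon u a.1 - (if a = a0 then ε * mon u b0 else 0) := by
          intro a ha
          rw [hdm a ha, sub_self, Real.rpow_zero]
          by_cases h : a = a0
          · subst h; simp [hcs]; ring
          · simp [hcs, h]
        have h0' : ∑ a ∈ A.attach.filter P, c a * mon u a.1 = 0 := h0
        rw [Finset.sum_congr rfl this, Finset.sum_sub_distrib, h0',
          Finset.sum_ite_eq' (A.attach.filter P) a0 (fun _ => ε * mon u b0), if_pos ha0mem]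
      · -- tail part
        refine Finset.sum_congr rfl fun a ha => ?_
        rw [Finset.mem_filter] at ha
        have hne : a ≠ a0 := fun h => ha.2 (h ▸ ha0P)
        simp [hcs, hne]
    rw [hsum]
    have : (0 - ε * mon u b0) + g t < 0 := by linarith
    have htm : 0 < t ^ m := Real.rpow_pos_of_pos ht m
    nlinarith


open scoped Classical in
theorem forward (n : ℕ) (A : Finset (Fin n → ℕ)) (hA : A.Nonempty) (C : Set (↥A → ℝ))
    (hC : C = {c : ↥A → ℝ | ∀ u : Fin n → ℝ, (∀ i, 0 ≤ u i) →
      0 ≤ ∑ a ∈ A.attach, c a * ∏ i, u i ^ a.1 i})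
    (c : ↥A → ℝ) (hc : c ∈ C) (hfr : c ∈ frontier C) :
    ∃ (w : Fin n → ℝ) (u : Fin n → ℝ), (∀ i, 0 < u i) ∧
      ∑ a ∈ A.attach.filter (fun a => ∀ b ∈ A,
          ∑ i, w i * (a.1 i : ℝ) ≤ ∑ i, w i * (b i : ℝ)),
        c a * ∏ i, u i ^ a.1 i = 0 := by
  have hcC : ∀ u : Fin n → ℝ, (∀ i, 0 ≤ u i) →
      0 ≤ ∑ a ∈ A.attach, c a * mon u a.1 := by rw [hC] at hc; exact hc
  have h1 : c ∈ closure Cᶜ := by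
    rw [frontier_eq_closure_inter_closure] at hfr
    exact hfr.2
  rw [mem_closure_iff_seq_limit] at h1
  obtain ⟨cs, hcsN, hcsT⟩ := h1
  -- strictly positive witnesses of negativity
  have h2 : ∀ k, ∃ u : Fin n → ℝ, (∀ i, 0 < u i) ∧
      ∑ a ∈ A.attach, cs k a * mon u a.1 < 0 := by
    intro k
    have hk := hcsN k
    rw [hC] at hk
    simp only [Set.mem_compl_iff, Set.mem_setOf_eq, not_forall, not_le] at hk
    obtain ⟨u0, hu0, hneg⟩ := hk
    set G : ℝ → ℝ := fun δ => ∑ a ∈ A.attach, cs k a * mon (fun i => u0 i + δ) a.1 with hG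
    have hGcont : Continuous G := by
      apply continuous_finset_sum
      intro a _
      exact continuous_const.mul (continuous_finset_prod _ fun i _ =>
        ((continuous_const.add continuous_id).pow _))
    have hG0 : G 0 < 0 := by simpa [hG, mon] using hneg
    have hev : ∀ᶠ δ in 𝓝[>] (0:ℝ), G δ < 0 ∧ 0 < δ := by
      have ht := (hGcont.tendsto 0).mono_left (nhdsWithin_le_nhds (s := Set.Ioi (0:ℝ)))
      have hpos : ∀ᶠ δ in 𝓝[>] (0:ℝ), 0 < δ := by
        filter_upwards [self_mem_nhdsWithin] with δ hδ
        exact hδ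
      exact (ht.eventually (eventually_lt_nhds hG0)).and hpos
    obtain ⟨δ, hδ1, hδ2⟩ := hev.exists
    exact ⟨fun i => u0 i + δ, fun i => by have := hu0 i; positivity, hδ1⟩
  choose uk hukpos hukneg using h2
  have hAatt : A.attach.Nonempty := Finset.attach_nonempty_iff.mpr hA
  set M : ℕ → ℝ := fun k => A.attach.sup' hAatt (fun a => mon (uk k) a.1) with hM
  have hMpos : ∀ k, 0 < M k := by
    intro k
    obtain ⟨a, ha⟩ := hAatt
    have h3 : mon (uk k) a.1 ≤ M k := by
      rw [hM]; exact Finset.le_sup' (fun a => mon (uk k) a.1) ha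
    exact lt_of_lt_of_le (mon_pos (hukpos k) a.1) h3
  set z : ℕ → ↥A → ℝ := fun k a => mon (uk k) a.1 / M k with hzdef
  have hzpos : ∀ k a, 0 < z k a := fun k a => div_pos (mon_pos (hukpos k) a.1) (hMpos k)
  have hzle : ∀ k a, z k a ≤ 1 := by
    intro k a
    rw [hzdef]
    refine (div_le_one (hMpos k)).mpr ?_
    rw [hM]
    exact Finset.le_sup' (fun a => mon (uk k) a.1) (Finset.mem_attach _ a)
  have hzmem : ∀ k, z k ∈ Set.univ.pi (fun _ : ↥A => Set.Icc (0:ℝ) 1) := fun k =>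
    Set.mem_univ_pi.mpr fun a => ⟨(hzpos k a).le, hzle k a⟩
  obtain ⟨y, hymem, φ, hφ, hzy⟩ :=
    (isCompact_univ_pi fun _ : ↥A => isCompact_Icc).tendsto_subseq hzmem
  have hzya : ∀ a, Tendsto (fun k => z (φ k) a) atTop (𝓝 (y a)) :=
    fun a => (tendsto_pi_nhds.mp hzy) a
  have hynn : ∀ a, 0 ≤ y a := fun a => (Set.mem_univ_pi.mp hymem a).1
  -- a point where y = 1
  have hmax : ∀ k, ∃ a : ↥A, z k a = 1 := by
    intro k
    obtain ⟨a, _, ha⟩ := Finset.exists_mem_eq_sup' hAatt (fun a => mon (uk k) a.1)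
    refine ⟨a, ?_⟩
    have hMk : M k = mon (uk k) a.1 := by rw [hM]; exact ha
    rw [hzdef]
    simp only [hMk]
    exact div_self (mon_pos (hukpos k) a.1).ne'
  obtain ⟨a0, ha0freq⟩ : ∃ a0 : ↥A, ∃ᶠ k in atTop, z (φ k) a0 = 1 := by
    by_contra h
    push_neg at h
    have h' : ∀ᶠ k in atTop, ∀ a : ↥A, ¬ z (φ k) a = 1 :=
      eventually_all.mpr fun a => h a
    obtain ⟨k, hk⟩ := h'.exists
    obtain ⟨a, ha⟩ := hmax (φ k)
    exact hk a ha
  have hya0 : y a0 = 1 :=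
    tendsto_nhds_unique_of_frequently_eq (hzya a0) tendsto_const_nhds ha0freq
  have hya0ne : y a0 ≠ 0 := by rw [hya0]; norm_num
  -- the limit coefficient sum vanishes
  have hsum0 : ∑ a ∈ A.attach, c a * y a = 0 := by
    set F : ℕ → ℝ := fun k => ∑ a ∈ A.attach, c a * z (φ k) a with hF
    have hFt : Tendsto F atTop (𝓝 (∑ a ∈ A.attach, c a * y a)) :=
      tendsto_finset_sum _ fun a _ => (hzya a).const_mul (c a)
    have hF0 : ∀ k, 0 ≤ F k := by
      intro k
      have he : F k = (∑ a ∈ A.attach, c a * mon (uk (φ k)) a.1) / M (φ k) := by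
        rw [hF, Finset.sum_div]
        exact Finset.sum_congr rfl fun a _ => by rw [hzdef]; ring
      rw [he]
      exact div_nonneg (hcC _ fun i => (hukpos _ i).le) (hMpos _).le
    set G2 : ℕ → ℝ := fun k => ∑ a ∈ A.attach, |c a - cs (φ k) a| with hG2
    have hFG : ∀ k, F k ≤ G2 k := by
      intro k
      have hneg2 : (∑ a ∈ A.attach, cs (φ k) a * z (φ k) a) ≤ 0 := by
        have he : (∑ a ∈ A.attach, cs (φ k) a * z (φ k) a)
            = (∑ a ∈ A.attach, cs (φ k) a * mon (uk (φ k)) a.1) / M (φ k) := by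
          rw [Finset.sum_div]; exact Finset.sum_congr rfl fun a _ => by rw [hzdef]; ring
        rw [he]
        exact le_of_lt (div_neg_of_neg_of_pos (hukneg (φ k)) (hMpos (φ k)))
      have hsplit : F k = (∑ a ∈ A.attach, (c a - cs (φ k) a) * z (φ k) a)
          + ∑ a ∈ A.attach, cs (φ k) a * z (φ k) a := by
        rw [hF, ← Finset.sum_add_distrib]
        exact Finset.sum_congr rfl fun a _ => by ring
      have hb : (∑ a ∈ A.attach, (c a - cs (φ k) a) * z (φ k) a) ≤ G2 k := by
        refine Finset.sum_le_sum fun a _ => ?_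
        calc (c a - cs (φ k) a) * z (φ k) a ≤ |c a - cs (φ k) a| * z (φ k) a :=
              mul_le_mul_of_nonneg_right (le_abs_self _) (hzpos _ a).le
          _ ≤ |c a - cs (φ k) a| * 1 := mul_le_mul_of_nonneg_left (hzle _ a) (abs_nonneg _)
          _ = |c a - cs (φ k) a| := mul_one _
      linarith
    have hGt : Tendsto G2 atTop (𝓝 0) := by
      have ht : Tendsto G2 atTop (𝓝 (∑ _a ∈ A.attach, (0:ℝ))) := by
        apply tendsto_finset_sum
        intro a _
        have hca : Tendsto (fun k => cs (φ k) a) atTop (𝓝 (c a)) :=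
          (tendsto_pi_nhds.mp (hcsT.comp hφ.tendsto_atTop)) a
        have h3 := (tendsto_const_nhds (x := c a)).sub hca
        simpa using h3.abs
      simpa using ht
    have hle : (∑ a ∈ A.attach, c a * y a) ≤ 0 := le_of_tendsto_of_tendsto' hFt hGt hFG
    have hge : (0:ℝ) ≤ ∑ a ∈ A.attach, c a * y a := ge_of_tendsto' hFt hF0
    linarith
  -- logarithms
  set aR : ↥A → Fin n → ℝ := fun a i => (a.1 i : ℝ) with haR
  set vk : ℕ → Fin n → ℝ := fun k i => Real.log (uk (φ k) i) with hvk
  have hdtlog : ∀ (k : ℕ) (a : ↥A), dt (aR a) (vk k) = Real.log (mon (uk (φ k)) a.1) := by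
    intro k a
    rw [mon, Real.log_prod (fun i _ => (pow_pos (hukpos (φ k) i) _).ne')]
    unfold dt
    exact Finset.sum_congr rfl fun i _ => by rw [Real.log_pow]
  have hlogz : ∀ (k : ℕ) (a : ↥A),
      Real.log (z (φ k) a) = dt (aR a) (vk k) - Real.log (M (φ k)) := by
    intro k a
    rw [hzdef]
    simp only []
    rw [Real.log_div (mon_pos (hukpos (φ k)) a.1).ne' (hMpos (φ k)).ne', hdtlog]
  have hLS : ∀ a : ↥A, y a ≠ 0 →
      Tendsto (fun k => Real.log (z (φ k) a)) atTop (𝓝 (Real.log (y a))) :=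
    fun a ha => ((Real.continuousAt_log ha).tendsto).comp (hzya a)
  have hLN : ∀ a : ↥A, y a = 0 → Tendsto (fun k => Real.log (z (φ k) a)) atTop atBot := by
    intro a ha
    have h3 : Tendsto (fun k => z (φ k) a) atTop (𝓝[>] 0) := by
      apply tendsto_nhdsWithin_of_tendsto_nhds_of_eventually_within
      · exact ha ▸ hzya a
      · exact Eventually.of_forall fun k => hzpos (φ k) a
    exact Real.tendsto_log_nhdsGT_zero.comp h3
  have hdiff : ∀ (k : ℕ) (a : ↥A), dt (aR a - aR a0) (vk k)
      = Real.log (z (φ k) a) - Real.log (z (φ k) a0) := by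
    intro k a; rw [dt_sub_left, hlogz, hlogz]; ring
  have hDS : ∀ a : ↥A, y a ≠ 0 → Tendsto (fun k => dt (aR a - aR a0) (vk k)) atTop
      (𝓝 (Real.log (y a) - Real.log (y a0))) := by
    intro a ha
    exact ((hLS a ha).sub (hLS a0 hya0ne)).congr fun k => (hdiff k a).symm
  have hDN : ∀ a : ↥A, y a = 0 →
      Tendsto (fun k => dt (aR a - aR a0) (vk k)) atTop atBot := by
    intro a ha
    have h3 := (hLN a ha).atBot_add ((hLS a0 hya0ne).neg)
    exact h3.congr fun k => by rw [hdiff k a]; ring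
  -- linear algebra setup
  set S : Set ↥A := {a | y a ≠ 0} with hS
  set T : Set (Fin n → ℝ) := (fun a : ↥A => aR a - aR a0) '' S with hT
  obtain ⟨b, hbT, hspan, hbli⟩ := exists_linearIndependent ℝ T
  haveI : Fintype ↥b := ((Set.toFinite T).subset hbT).fintype
  have hinj := gram_injective b hbli
  have hsurj := (LinearMap.injective_iff_surjective).mp hinj
  set eG := LinearEquiv.ofBijective (gram b) ⟨hinj, hsurj⟩ with heG
  have hjex : ∀ j : ↥b, ∃ a : ↥A, a ∈ S ∧ aR a - aR a0 = (j : Fin n → ℝ) := by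
    intro j
    obtain ⟨a, haS, hae⟩ := hbT j.2
    exact ⟨a, haS, hae⟩
  choose fa hfaS hfaeq using hjex
  set β : ↥b → ℝ := fun j => Real.log (y (fa j)) - Real.log (y a0) with hβ
  have hβt : ∀ j : ↥b, Tendsto (fun k => dt (j : Fin n → ℝ) (vk k)) atTop (𝓝 (β j)) := by
    intro j
    have h3 := hDS (fa j) (hfaS j)
    rw [hfaeq j] at h3
    exact h3
  set v : Fin n → ℝ := lincomb b (eG.symm β) with hv
  have hvb : ∀ j : ↥b, dt (j : Fin n → ℝ) v = β j := by
    intro j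
    have h3 : gram b (eG.symm β) = β := eG.apply_symm_apply β
    exact congrFun h3 j
  have hconvspan : ∀ x ∈ Submodule.span ℝ T,
      Tendsto (fun k => dt x (vk k)) atTop (𝓝 (dt x v)) := by
    intro x hx
    rw [← hspan] at hx
    refine tendsto_dt_span vk v b ?_ hx
    intro x' hx'
    have h3 := hβt ⟨x', hx'⟩
    rw [← hvb ⟨x', hx'⟩] at h3
    exact h3
  have hconv : ∀ a : ↥A, y a ≠ 0 →
      Real.log (y a) - Real.log (y a0) = dt (aR a - aR a0) v := by
    intro a haS
    have hmem : (aR a - aR a0) ∈ Submodule.span ℝ T :=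
      Submodule.subset_span ⟨a, haS, rfl⟩
    exact tendsto_nhds_unique (hDS a haS) (hconvspan _ hmem)
  -- the positive point u
  set u : Fin n → ℝ := fun i => Real.exp (v i) with hu
  have hupos : ∀ i, 0 < u i := fun i => Real.exp_pos _
  have hmonu : ∀ a : ↥A, mon u a.1 = Real.exp (dt (aR a) v) := by
    intro a
    rw [mon, dt, Real.exp_sum]
    refine Finset.prod_congr rfl fun i _ => ?_
    rw [show aR a i * v i = (a.1 i : ℝ) * v i from rfl, Real.exp_nat_mul]
  set lam : ℝ := Real.exp (- dt (aR a0) v) with hlam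
  have hlampos : 0 < lam := Real.exp_pos _
  have hkey : ∀ a : ↥A, y a ≠ 0 → y a = lam * mon u a.1 := by
    intro a ha
    have hypos : 0 < y a := lt_of_le_of_ne (hynn a) (Ne.symm ha)
    have h4 : Real.log (y a) = dt (aR a) v - dt (aR a0) v := by
      have h3 := hconv a ha
      rw [hya0, Real.log_one, dt_sub_left] at h3
      linarith
    calc y a = Real.exp (Real.log (y a)) := (Real.exp_log hypos).symm
      _ = Real.exp (dt (aR a) v - dt (aR a0) v) := by rw [h4]
      _ = lam * mon u a.1 := by
          rw [hmonu, hlam, ← Real.exp_add]; ring_nf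
  -- correction terms r_k
  set tk : ℕ → ↥b → ℝ := fun k j => dt (j : Fin n → ℝ) v - dt (j : Fin n → ℝ) (vk k) with htk
  have htkt : Tendsto tk atTop (𝓝 0) := by
    rw [tendsto_pi_nhds]
    intro j
    have h3 := (tendsto_const_nhds (x := dt (j : Fin n → ℝ) v)).sub (hβt j)
    rw [← hvb j] at h3
    simpa using h3
  set sk : ℕ → ↥b → ℝ := fun k => eG.symm (tk k) with hsk
  have hskt : Tendsto sk atTop (𝓝 0) := by
    have hcont : Continuous (eG.symm : (↥b → ℝ) →ₗ[ℝ] (↥b → ℝ)) :=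
      LinearMap.continuous_of_finiteDimensional _
    have h3 := (hcont.tendsto 0).comp htkt
    have h4 : Tendsto (⇑eG.symm ∘ tk) atTop (𝓝 0) := by simpa [map_zero] using h3
    exact h4
  set rk : ℕ → Fin n → ℝ := fun k => lincomb b (sk k) with hrk
  have hrkb : ∀ (k : ℕ) (j : ↥b), dt (j : Fin n → ℝ) (rk k) = tk k j := by
    intro k j
    have h3 : gram b (sk k) = tk k := eG.apply_symm_apply (tk k)
    exact congrFun h3 j
  have hrk0 : ∀ x : Fin n → ℝ, Tendsto (fun k => dt x (rk k)) atTop (𝓝 0) := by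
    intro x
    have h3 : Tendsto (fun k => ∑ j : ↥b, sk k j * dt x (j : Fin n → ℝ)) atTop
        (𝓝 (∑ j : ↥b, 0 * dt x (j : Fin n → ℝ))) := by
      apply tendsto_finset_sum
      intro j _
      exact ((tendsto_pi_nhds.mp hskt) j).mul_const _
    have h4 : ∀ k, dt x (rk k) = ∑ j : ↥b, sk k j * dt x (j : Fin n → ℝ) := by
      intro k; rw [hrk]; exact dt_lincomb b x (sk k)
    simpa [← h4] using h3
  -- eventual positivity off the face
  have hevpos : ∀ᶠ k in atTop, ∀ a : ↥A, y a = 0 →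
      0 < dt (aR a - aR a0) (v - vk k - rk k) := by
    rw [eventually_all]
    intro a
    by_cases ha : y a = 0
    · have hexp : ∀ k, dt (aR a - aR a0) (v - vk k - rk k)
          = (dt (aR a - aR a0) v + (- dt (aR a - aR a0) (vk k))) + (- dt (aR a - aR a0) (rk k)) := by
        intro k; rw [dt_sub_right, dt_sub_right]; ring
      have h5 : Tendsto (fun k => dt (aR a - aR a0) (v - vk k - rk k)) atTop atTop := by
        have hn : Tendsto (fun k => - dt (aR a - aR a0) (vk k)) atTop atTop :=
          tendsto_neg_atBot_iff.mp (by simpa using (hDN a ha))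
        have h6 : Tendsto (fun k => dt (aR a - aR a0) v + (- dt (aR a - aR a0) (vk k)))
            atTop atTop := Tendsto.add_atTop tendsto_const_nhds hn
        have h7 := Tendsto.atTop_add h6 ((hrk0 (aR a - aR a0)).neg)
        exact h7.congr fun k => (hexp k).symm
      exact (h5.eventually_gt_atTop 0).mono fun k hk _ => hk
    · exact Eventually.of_forall fun k h => absurd h ha
  obtain ⟨K, hK⟩ := hevpos.exists
  set w : Fin n → ℝ := v - vk K - rk K with hw
  have hwS : ∀ a : ↥A, y a ≠ 0 → dt (aR a - aR a0) w = 0 := by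
    intro a ha
    have hagree : ∀ x ∈ (b : Set (Fin n → ℝ)), dt x (rk K) = dt x (v - vk K) := by
      intro x hx
      have h3 := hrkb K ⟨x, hx⟩
      rw [htk] at h3
      rw [h3, dt_sub_right]
    have hmem : (aR a - aR a0) ∈ Submodule.span ℝ T :=
      Submodule.subset_span ⟨a, ha, rfl⟩
    rw [← hspan] at hmem
    have h3 : dt (aR a - aR a0) (rk K) = dt (aR a - aR a0) (v - vk K) :=
      dt_eq_span (rk K) (v - vk K) b hagree hmem
    rw [hw, dt_sub_right, h3]
    ring
  -- conclusion
  refine ⟨w, u, hupos, ?_⟩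
  have hdta : ∀ p : ↥A, (∑ i, w i * (p.1 i : ℝ)) = dt w (aR p) := fun p => rfl
  have hdiffw : ∀ p : ↥A, dt (aR p - aR a0) w = dt w (aR p) - dt w (aR a0) := by
    intro p; rw [dt_sub_left, dt_comm (aR p) w, dt_comm (aR a0) w]
  have hfilter : A.attach.filter (fun a => ∀ b' ∈ A,
        ∑ i, w i * (a.1 i : ℝ) ≤ ∑ i, w i * (b' i : ℝ))
      = A.attach.filter (fun a => y a ≠ 0) := by
    ext a
    simp only [Finset.mem_filter, Finset.mem_attach, true_and]
    constructor
    · intro h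
      by_contra ha
      have ha' : y a = 0 := ha
      have h3 : 0 < dt (aR a - aR a0) w := hK a ha'
      have h4 := h a0.1 a0.2
      rw [hdta a, hdiffw a] at *
      have h5 : (∑ i, w i * ((a0.1 : Fin n → ℕ) i : ℝ)) = dt w (aR a0) := rfl
      rw [h5] at h4
      linarith
    · intro ha b' hb'
      have h3 : dt (aR a - aR a0) w = 0 := hwS a ha
      rw [hdiffw a] at h3
      have h6 : (∑ i, w i * (b' i : ℝ)) = dt w (aR ⟨b', hb'⟩) := rfl
      rw [hdta a, h6]
      by_cases hb0 : y ⟨b', hb'⟩ = 0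
      · have h4 : 0 < dt (aR ⟨b', hb'⟩ - aR a0) w := hK _ hb0
        rw [hdiffw _] at h4
        linarith
      · have h4 : dt (aR ⟨b', hb'⟩ - aR a0) w = 0 := hwS _ hb0
        rw [hdiffw _] at h4
        linarith
  rw [hfilter]
  have hterm : ∀ a ∈ A.attach.filter (fun a => y a ≠ 0),
      c a * (∏ i, u i ^ a.1 i) = (c a * y a) / lam := by
    intro a ha
    rw [Finset.mem_filter] at ha
    have h3 := hkey a ha.2
    have h4 : (∏ i, u i ^ a.1 i) = mon u a.1 := rfl
    rw [h4, h3]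
    field_simp
  rw [Finset.sum_congr rfl hterm, ← Finset.sum_div]
  have h5 : ∑ a ∈ A.attach.filter (fun a => y a ≠ 0), c a * y a
      = ∑ a ∈ A.attach, c a * y a := by
    apply Finset.sum_filter_of_ne
    intro a _ h hy
    exact h (by rw [hy, mul_zero])
  rw [h5, hsum0, zero_div]

end CoposAux

open scoped Classical in
/-- A copositive coefficient vector `c ∈ C_A` lies on the topological boundary of the
copositive cone `C_A` iff some facial restriction `Σ_{a∈A_w} c_a u^a` vanishes at a
strictly positive point `u`, i.e. iff `f_c` has a zero on the nonnegative part of the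
toric variety `X_A`. -/
theorem frontier_copositive_cone_iff (n : ℕ) (A : Finset (Fin n → ℕ)) (hA : A.Nonempty)
    (hdeg : ∃ d : ℕ, ∀ a ∈ A, ∑ i, a i = d) (C : Set (↥A → ℝ))
    (hC : C = {c : ↥A → ℝ | ∀ u : Fin n → ℝ, (∀ i, 0 ≤ u i) →
      0 ≤ ∑ a ∈ A.attach, c a * ∏ i, u i ^ a.1 i})
    (c : ↥A → ℝ) (hc : c ∈ C) :
    c ∈ frontier C ↔
      ∃ (w : Fin n → ℝ) (u : Fin n → ℝ), (∀ i, 0 < u i) ∧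
        ∑ a ∈ A.attach.filter (fun a => ∀ b ∈ A,
            ∑ i, w i * (a.1 i : ℝ) ≤ ∑ i, w i * (b i : ℝ)),
          c a * ∏ i, u i ^ a.1 i = 0 := by
  constructor
  · intro hfr
    exact CoposAux.forward n A hA C hC c hc hfr
  · rintro ⟨w, u, hu, h0⟩
    exact CoposAux.backward n A hA C hC c hc w u hu h0
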